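/- With A^{(0)}(d,j,m) defined as the number of r-colored permutations of [d] with ε_1 = 0, σ_d = d+1−j, ε_d = 0, and exactly m descents: A^{(0)}(d+1, k+1, m) = A^{(0)}(d+1, d+1−k, d−m) for all 0 ≤ k ≤ d and 0 ≤ m ≤ d. -/

import Mathlib

/-- Number of descents of an `r`-colored permutation of `[d]` (zero-based indexing),
with the conventions σ_{d+1} = d+1, ε_{d+1} = 0: position `i` (1-based `i+1`) is a
descent iff ε_{i+1} > ε_{i+2}, or ε_{i+1} = ε_{i+2} and σ_{i+1} > σ_{i+2}; the last
position is a descent iff its color is nonzero. -/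
noncomputable def colDes (d r : ℕ) (σ : Fin d → Fin d) (ε : Fin d → Fin r) : ℕ :=
  Nat.card {i : Fin d //
    if h : i.1 + 1 < d then
      ε ⟨i.1 + 1, h⟩ < ε i ∨ (ε i = ε ⟨i.1 + 1, h⟩ ∧ σ ⟨i.1 + 1, h⟩ < σ i)
    else 0 < (ε i : ℕ)}

/-- The bar involution on colors: 0 ↦ 0 and s ↦ r - s for s ≠ 0. -/
def barColor {r : ℕ} (e : Fin r) : Fin r :=
  if h : (e : ℕ) = 0 then e else ⟨r - e.1, by have := e.isLt; omega⟩

/-- `countA r d j s m` is the number `A^{(s)}(d, j, m)` of `r`-colored permutations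
(σ, ε) of `[d]` with ε_1 = 0, σ_d = d + 1 - j, ε_d = s and exactly `m` descents. -/
noncomputable def countA (r d j s m : ℕ) : ℕ :=
  Nat.card {p : (Fin d → Fin d) × (Fin d → Fin r) //
    Function.Bijective p.1 ∧
    (∀ i : Fin d, i.1 = 0 → (p.2 i : ℕ) = 0) ∧
    (∀ i : Fin d, i.1 = d - 1 → (p.1 i : ℕ) = d - j ∧ (p.2 i : ℕ) = s) ∧
    colDes d r p.1 p.2 = m}

lemma barColor_val {r : ℕ} (e : Fin r) :
    (barColor e : ℕ) = if (e : ℕ) = 0 then 0 else r - (e : ℕ) := by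
  unfold barColor
  split <;> simp_all

lemma barColor_barColor {r : ℕ} (e : Fin r) : barColor (barColor e) = e := by
  have h1 := e.isLt
  apply Fin.ext
  rw [barColor_val (barColor e), barColor_val e]
  split_ifs <;> omega

/-- Indicator (as an integer) that the color at position `j` is nonzero. -/
def Hfun (d r : ℕ) (ε : Fin (d+1) → Fin r) : ℕ → ℤ := fun j =>
  if hj : j < d + 1 then (if (ε ⟨j, hj⟩ : ℕ) = 0 then 0 else 1) else 0

def Gfun (d r : ℕ) (ε : Fin (d+1) → Fin r) : ℕ → ℤ := fun j =>
  if j < d then 1 + Hfun d r ε j - Hfun d r ε (j+1) else 0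

open Classical in
lemma colDes_eq_sum (d r : ℕ) (σ : Fin d → Fin d) (ε : Fin d → Fin r) :
    colDes d r σ ε = ∑ i : Fin d,
      if (if h : i.1 + 1 < d then
            ε ⟨i.1 + 1, h⟩ < ε i ∨ (ε i = ε ⟨i.1 + 1, h⟩ ∧ σ ⟨i.1 + 1, h⟩ < σ i)
          else 0 < (ε i : ℕ)) then 1 else 0 := by
  unfold colDes
  rw [Nat.card_eq_fintype_card, Fintype.card_subtype, Finset.card_filter]

open Finset Classical in
lemma colDes_add_colDes (d r : ℕ) (σ : Fin (d+1) → Fin (d+1)) (ε : Fin (d+1) → Fin r)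
    (hσ : Function.Injective σ)
    (h0 : (ε ⟨0, Nat.succ_pos d⟩ : ℕ) = 0) (hl : (ε ⟨d, Nat.lt_succ_self d⟩ : ℕ) = 0) :
    colDes (d+1) r σ ε + colDes (d+1) r (fun i => (σ i).rev) (fun i => barColor (ε i)) = d := by
  have main : ∀ i : Fin (d+1),
      ((if (if h : i.1 + 1 < d + 1 then
            ε ⟨i.1 + 1, h⟩ < ε i ∨ (ε i = ε ⟨i.1 + 1, h⟩ ∧ σ ⟨i.1 + 1, h⟩ < σ i)
          else 0 < (ε i : ℕ)) then 1 else 0 : ℤ)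
      + (if (if h : i.1 + 1 < d + 1 then
            barColor (ε ⟨i.1 + 1, h⟩) < barColor (ε i) ∨
              (barColor (ε i) = barColor (ε ⟨i.1 + 1, h⟩) ∧ (σ ⟨i.1 + 1, h⟩).rev < (σ i).rev)
          else 0 < ((barColor (ε i)) : ℕ)) then 1 else 0))
      = Gfun d r ε i.1 := by
    intro i
    by_cases hi : i.1 < d
    · have h1 : i.1 + 1 < d + 1 := by omega
      have hH1 : Hfun d r ε i.1 = if (ε i : ℕ) = 0 then 0 else 1 := by
        unfold Hfun; rw [dif_pos (show i.1 < d + 1 by omega)]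
      have hH2 : Hfun d r ε (i.1+1) = if (ε ⟨i.1+1, h1⟩ : ℕ) = 0 then 0 else 1 := by
        unfold Hfun; rw [dif_pos h1]
      have hne : (σ ⟨i.1 + 1, h1⟩ : ℕ) ≠ (σ i : ℕ) := by
        intro h
        have h2 := hσ (Fin.ext h)
        have h3 := congrArg Fin.val h2
        simp at h3
      have hv1 := (ε i).isLt
      have hv2 := (ε ⟨i.1+1, h1⟩).isLt
      have hs1 := (σ i).isLt
      have hs2 := (σ ⟨i.1+1, h1⟩).isLt
      unfold Gfun
      rw [if_pos hi, hH1, hH2]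
      simp only [dif_pos h1]
      simp only [Fin.lt_def, Fin.ext_iff, Fin.val_rev, barColor_val]
      split_ifs <;> omega
    · have hz : (ε i : ℕ) = 0 := by
        have h2 : i = ⟨d, Nat.lt_succ_self d⟩ := Fin.ext (show i.1 = d by omega)
        rw [h2]; exact hl
      have hnd : ¬ (i.1 + 1 < d + 1) := by omega
      simp only [dif_neg hnd]
      unfold Gfun
      rw [if_neg hi]
      simp [hz, barColor_val]
  have key2 : colDes (d+1) r (fun i => (σ i).rev) (fun i => barColor (ε i)) = ∑ i : Fin (d+1),
      if (if h : i.1 + 1 < d + 1 then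
            barColor (ε ⟨i.1 + 1, h⟩) < barColor (ε i) ∨
              (barColor (ε i) = barColor (ε ⟨i.1 + 1, h⟩) ∧ (σ ⟨i.1 + 1, h⟩).rev < (σ i).rev)
          else 0 < ((barColor (ε i)) : ℕ)) then 1 else 0 :=
    colDes_eq_sum (d+1) r _ _
  have hG : ∑ j ∈ range (d+1), Gfun d r ε j = d := by
    rw [Finset.sum_range_succ]
    have hgd : Gfun d r ε d = 0 := by unfold Gfun; rw [if_neg (lt_irrefl d)]
    rw [hgd, add_zero]
    rw [Finset.sum_congr rfl (fun j hj => by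
      unfold Gfun; rw [if_pos (Finset.mem_range.mp hj)])]
    have hsplit : ∀ j ∈ range d, (1 + Hfun d r ε j - Hfun d r ε (j+1) : ℤ)
        = 1 + (Hfun d r ε j - Hfun d r ε (j+1)) := fun j _ => by ring
    rw [Finset.sum_congr rfl hsplit, Finset.sum_add_distrib, Finset.sum_const, card_range,
        Finset.sum_range_sub' (Hfun d r ε)]
    have hH0 : Hfun d r ε 0 = 0 := by unfold Hfun; rw [dif_pos (Nat.succ_pos d), if_pos h0]
    have hHd : Hfun d r ε d = 0 := by unfold Hfun; rw [dif_pos (Nat.lt_succ_self d)]; simpa using hl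
    rw [hH0, hHd]
    simp
  have cast : ((colDes (d+1) r σ ε : ℤ)
      + (colDes (d+1) r (fun i => (σ i).rev) (fun i => barColor (ε i)) : ℤ)) = d := by
    rw [colDes_eq_sum (d+1) r σ ε, key2]
    push_cast
    rw [← Finset.sum_add_distrib]
    rw [Finset.sum_congr rfl (fun i _ => main i)]
    rw [Fin.sum_univ_eq_sum_range (Gfun d r ε) (d+1), hG]
  exact_mod_cast cast

lemma step_mem (d r : ℕ) (j j' m : ℕ) (hj : j ≤ d) (hj' : j' = d - j)
    (p : (Fin (d+1) → Fin (d+1)) × (Fin (d+1) → Fin r))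
    (hp : Function.Bijective p.1 ∧
      (∀ i : Fin (d+1), i.1 = 0 → (p.2 i : ℕ) = 0) ∧
      (∀ i : Fin (d+1), i.1 = d + 1 - 1 → (p.1 i : ℕ) = d + 1 - (j+1) ∧ (p.2 i : ℕ) = 0) ∧
      colDes (d+1) r p.1 p.2 = m) :
    Function.Bijective (fun i => (p.1 i).rev) ∧
      (∀ i : Fin (d+1), i.1 = 0 → ((barColor (p.2 i)) : ℕ) = 0) ∧
      (∀ i : Fin (d+1), i.1 = d + 1 - 1 →
        (((p.1 i).rev : ℕ) = d + 1 - (j'+1)) ∧ ((barColor (p.2 i)) : ℕ) = 0) ∧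
      colDes (d+1) r (fun i => (p.1 i).rev) (fun i => barColor (p.2 i)) = d - m := by
  obtain ⟨hbij, h0, hlast, hdes⟩ := hp
  have hm' : colDes (d+1) r p.1 p.2
      + colDes (d+1) r (fun i => (p.1 i).rev) (fun i => barColor (p.2 i)) = d :=
    colDes_add_colDes d r p.1 p.2 hbij.1 (h0 ⟨0, Nat.succ_pos d⟩ rfl)
      ((hlast ⟨d, Nat.lt_succ_self d⟩ rfl).2)
  refine ⟨Fin.rev_bijective.comp hbij, ?_, ?_, by omega⟩
  · intro i hi
    rw [barColor_val, h0 i hi]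
    simp
  · intro i hi
    obtain ⟨ha, hb⟩ := hlast i hi
    refine ⟨?_, by rw [barColor_val, hb]; simp⟩
    rw [Fin.val_rev]
    have hlt := (p.1 i).isLt
    omega

theorem countA_symmetry_zero (d r : ℕ) (hr : 1 ≤ r) (k m : ℕ) (hk : k ≤ d) (hm : m ≤ d) :
    countA r (d + 1) (k + 1) 0 m = countA r (d + 1) (d + 1 - k) 0 (d - m) := by
  classical
  rw [show d + 1 - k = (d - k) + 1 from by omega]
  unfold countA
  apply Nat.card_congr
  refine ⟨fun p => ⟨((fun i => (p.1.1 i).rev), (fun i => barColor (p.1.2 i))), ?_⟩,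
         fun p => ⟨((fun i => (p.1.1 i).rev), (fun i => barColor (p.1.2 i))), ?_⟩, ?_, ?_⟩
  · exact step_mem d r k (d-k) m hk rfl p.1 p.2
  · have h2 := step_mem d r (d-k) k (d-m) (Nat.sub_le d k) (by omega) p.1 p.2
    rw [show d - (d - m) = m from by omega] at h2
    exact h2
  · intro p
    refine Subtype.ext (Prod.ext (funext fun i => ?_) (funext fun i => ?_))
    · exact Fin.rev_rev _
    · exact barColor_barColor _
  · intro p
    refine Subtype.ext (Prod.ext (funext fun i => ?_) (funext fun i => ?_))
    · exact Fin.rev_rev _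
    · exact barColor_barColor _
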